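/- Let T be an ergodic measure-preserving automorphism of a probability space (X, F, μ) and let f : X → ℝ be integrable with ∫ f dμ = 0. Then for μ-almost every x ∈ X and every ε > 0, the Birkhoff sums S_n(x) = ∑_{k=0}^{n-1} f(T^k x) satisfy |S_n(x)| < ε for infinitely many n. -/

import Mathlib

set_option linter.unusedSectionVars false

open MeasureTheory Filter Set

namespace AtkinsonAux

variable {X : Type*} [MeasurableSpace X] {μ : Measure X}

/-- The Garsia auxiliary sequence: `mseq T g n x = max (0, S₁ x, ..., Sₙ x)`. -/
noncomputable def mseq (T : X → X) (g : X → ℝ) : ℕ → X → ℝ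
  | 0 => fun _ => 0
  | n + 1 => fun x => max 0 (g x + mseq T g n (T x))

variable {T : X → X} {g : X → ℝ}

lemma mseq_nonneg (n : ℕ) (x : X) : 0 ≤ mseq T g n x := by
  cases n with
  | zero => exact le_refl _
  | succ n => exact le_max_left _ _

lemma mseq_mono (n : ℕ) (x : X) : mseq T g n x ≤ mseq T g (n + 1) x := by
  induction n generalizing x with
  | zero => exact le_max_left _ _
  | succ n ih =>
      exact max_le_max (le_refl 0) (add_le_add (le_refl _) (ih (T x)))

lemma birkhoffSum_le_mseq {k n : ℕ} (hk : k ≤ n) (x : X) :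
    birkhoffSum T g k x ≤ mseq T g n x := by
  induction n generalizing k x with
  | zero =>
      interval_cases k
      simp [mseq]
  | succ n ih =>
      rcases Nat.eq_zero_or_pos k with rfl | hk0
      · simpa [birkhoffSum] using mseq_nonneg (n+1) x
      · obtain ⟨j, rfl⟩ := Nat.exists_eq_succ_of_ne_zero (Nat.pos_iff_ne_zero.mp hk0)
        calc birkhoffSum T g (j+1) x = g x + birkhoffSum T g j (T x) := birkhoffSum_succ' T g j x
        _ ≤ g x + mseq T g n (T x) := add_le_add (le_refl _) (ih (Nat.succ_le_succ_iff.mp hk) (T x))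
        _ ≤ mseq T g (n+1) x := le_max_right _ _

lemma mseq_attained (n : ℕ) (x : X) : ∃ k ≤ n, mseq T g n x = birkhoffSum T g k x := by
  induction n generalizing x with
  | zero => exact ⟨0, le_refl _, by simp [mseq]⟩
  | succ n ih =>
      rcases max_cases (0 : ℝ) (g x + mseq T g n (T x)) with ⟨h1, _⟩ | ⟨h1, _⟩
      · exact ⟨0, Nat.zero_le _, by simp [mseq, h1]⟩
      · obtain ⟨k, hk, hke⟩ := ih (T x)
        refine ⟨k + 1, Nat.succ_le_succ hk, ?_⟩
        rw [show mseq T g (n+1) x = max 0 (g x + mseq T g n (T x)) from rfl, h1, hke,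
          birkhoffSum_succ']


lemma mseq_measurable (hT : Measurable T) (hg : Measurable g) (n : ℕ) :
    Measurable (mseq T g n) := by
  induction n with
  | zero => exact measurable_const
  | succ n ih => exact measurable_const.max (hg.add (ih.comp hT))

lemma birkhoffSum_measurable (hT : Measurable T) (hg : Measurable g) (n : ℕ) :
    Measurable (birkhoffSum T g n) :=
  Finset.measurable_sum _ fun k _ => hg.comp (hT.iterate k)

lemma mseq_le_sum_abs (n : ℕ) (x : X) :
    mseq T g n x ≤ ∑ k ∈ Finset.range n, |g (T^[k] x)| := by
  induction n generalizing x with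
  | zero => simp [mseq]
  | succ n ih =>
      have h1 : g x + mseq T g n (T x) ≤ |g x| + ∑ k ∈ Finset.range n, |g (T^[k] (T x))| :=
        add_le_add (le_abs_self _) (ih (T x))
      have h2 : (|g x| + ∑ k ∈ Finset.range n, |g (T^[k] (T x))|)
          = ∑ k ∈ Finset.range (n+1), |g (T^[k] x)| := by
        rw [Finset.sum_range_succ']
        simp [Function.iterate_succ_apply, add_comm]
      refine max_le ?_ (h1.trans h2.le)
      rw [← h2]
      positivity

lemma mseq_integrable (hT : MeasurePreserving T μ μ) (hTm : Measurable T) (hg : Measurable g)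
    (hgi : Integrable g μ) (n : ℕ) : Integrable (mseq T g n) μ := by
  have hdom : Integrable (fun x => ∑ k ∈ Finset.range n, |g (T^[k] x)|) μ := by
    apply integrable_finset_sum
    intro k _
    exact ((hT.iterate k).integrable_comp hgi.abs.aestronglyMeasurable).mpr hgi.abs
  refine hdom.mono' ((mseq_measurable hTm hg n).aestronglyMeasurable) ?_
  filter_upwards with x
  rw [Real.norm_eq_abs, abs_of_nonneg (mseq_nonneg n x)]
  exact mseq_le_sum_abs n x

/-- **Maximal ergodic theorem** (Garsia's proof). -/
theorem maximal_ergodic [IsFiniteMeasure μ] (T : X ≃ᵐ X) (hT : MeasurePreserving T μ μ)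
    (hg : Measurable g) (hgi : Integrable g μ) :
    0 ≤ ∫ x in {x | ∃ n, 0 < birkhoffSum T g (n + 1) x}, g x ∂μ := by
  set S := fun n x => birkhoffSum (⇑T) g n x with hS
  set M := mseq (⇑T) g with hM
  set A : ℕ → Set X := fun n => {x | 0 < M n x} with hA
  have hAm : ∀ n, MeasurableSet (A n) :=
    fun n => measurableSet_lt measurable_const (mseq_measurable T.measurable hg n)
  have hAmono : Monotone A := by
    intro m n hmn x hx
    simp only [hA, Set.mem_setOf_eq] at hx ⊢
    calc (0:ℝ) < M m x := hx
    _ ≤ M n x := by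
        clear hx
        induction hmn with
        | refl => exact le_refl _
        | step _ ih => exact ih.trans (mseq_mono _ _)
  have hUnion : {x | ∃ n, 0 < S (n + 1) x} = ⋃ n, A n := by
    ext x
    simp only [Set.mem_setOf_eq, Set.mem_iUnion, hA]
    constructor
    · rintro ⟨n, hn⟩
      exact ⟨n + 1, lt_of_lt_of_le hn (birkhoffSum_le_mseq le_rfl x)⟩
    · rintro ⟨n, hn⟩
      obtain ⟨k, hk, hke⟩ := mseq_attained (T := ⇑T) (g := g) n x
      rcases Nat.eq_zero_or_pos k with rfl | hk0
      · simp only [hM] at hn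
        rw [hke] at hn
        simp [hS, birkhoffSum] at hn
      · obtain ⟨j, rfl⟩ := Nat.exists_eq_succ_of_ne_zero (Nat.pos_iff_ne_zero.mp hk0)
        refine ⟨j, ?_⟩
        show 0 < birkhoffSum (⇑T) g (j+1) x
        rw [← hke]; exact hn
  -- key step: each finite-stage integral is nonneg
  have key : ∀ n, 0 ≤ ∫ x in A n, g x ∂μ := by
    intro n
    cases n with
    | zero =>
        have : A 0 = ∅ := by
          ext x; simp [hA, hM, mseq]
        simp [this]
    | succ n =>
        have hMi : ∀ m, Integrable (M m) μ := mseq_integrable hT T.measurable hg hgi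
        have hMTi : Integrable (fun x => M n (T x)) μ :=
          (hT.integrable_comp (hMi n).aestronglyMeasurable).mpr (hMi n)
        -- on A (n+1), g = M (n+1) - M n ∘ T
        have hgeq : ∀ x ∈ A (n+1), g x = M (n+1) x - M n (T x) := by
          intro x hx
          simp only [hA, Set.mem_setOf_eq] at hx
          have : M (n+1) x = max 0 (g x + M n (T x)) := rfl
          rw [this] at hx ⊢
          have hx2 : (0:ℝ) ≤ g x + M n (T x) := by
            by_contra hc
            push_neg at hc
            rw [max_eq_left hc.le] at hx
            exact lt_irrefl _ hx
          rw [max_eq_right hx2]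
          ring
        calc (0:ℝ) ≤ ∫ x, M (n+1) x ∂μ - ∫ x, M n x ∂μ := by
              have := integral_mono (hMi n) (hMi (n+1)) (fun x => mseq_mono n x)
              linarith
        _ = ∫ x, M (n+1) x ∂μ - ∫ x, M n (T x) ∂μ := by
              rw [MeasurePreserving.integral_comp hT T.measurableEmbedding]
        _ ≤ ∫ x in A (n+1), M (n+1) x ∂μ - ∫ x in A (n+1), M n (T x) ∂μ := by
              have h1 : ∫ x, M (n+1) x ∂μ = ∫ x in A (n+1), M (n+1) x ∂μ := by
                rw [← integral_indicator (hAm (n+1))]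
                apply integral_congr_ae
                filter_upwards with x
                by_cases hx : x ∈ A (n+1)
                · simp [hx]
                · simp only [hA, Set.mem_setOf_eq, not_lt] at hx
                  have := mseq_nonneg (T := ⇑T) (g := g) (n+1) x
                  have hz : M (n+1) x = 0 := le_antisymm hx this
                  simp [Set.indicator, hz]
              have h2 : ∫ x in A (n+1), M n (T x) ∂μ ≤ ∫ x, M n (T x) ∂μ :=
                setIntegral_le_integral hMTi
                  (Filter.Eventually.of_forall fun x => mseq_nonneg n (T x))
              linarith
        _ = ∫ x in A (n+1), g x ∂μ := by
              rw [← integral_sub ((hMi (n+1)).integrableOn) (hMTi.integrableOn)]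
              exact (setIntegral_congr_fun (hAm (n+1)) fun x hx => (hgeq x hx).symm)
  rw [hUnion]
  have := tendsto_setIntegral_of_monotone hAm hAmono hgi.integrableOn
  exact ge_of_tendsto' this key


lemma birkhoffSum_sub_const (T : X → X) (g : X → ℝ) (c : ℝ) (n : ℕ) (x : X) :
    birkhoffSum T (fun y => g y - c) n x = birkhoffSum T g n x - n * c := by
  simp [birkhoffSum, Finset.sum_sub_distrib, mul_comm]

/-- Half of the Birkhoff theorem: a.e., eventually `Sₙ ≤ q n` for every rational `q > δ`. -/
theorem ae_eventually_le (T : X ≃ᵐ X) (hT : Ergodic (⇑T) μ) [IsProbabilityMeasure μ]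
    (hg : Measurable g) (hgi : Integrable g μ) (hmean : ∫ x, g x ∂μ = 0)
    {δ : ℝ} (hδ : 0 < δ) :
    ∀ᵐ x ∂μ, ∀ q : ℚ, δ < (q : ℝ) →
      ∀ᶠ n in atTop, birkhoffSum (⇑T) g n x ≤ (q : ℝ) * n := by
  set S := fun n x => birkhoffSum (⇑T) g n x with hS
  set E : Set X := {x | ∃ q : ℚ, δ < (q : ℝ) ∧ ∃ᶠ n in atTop, (q : ℝ) * n < S n x} with hE
  have hSm : ∀ n, Measurable (S n) := fun n => birkhoffSum_measurable T.measurable hg n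
  have hEm : MeasurableSet E := by
    have : E = ⋃ (q : ℚ), ⋃ (_ : δ < (q : ℝ)), ⋂ (N : ℕ), ⋃ (n : ℕ), ⋃ (_ : N ≤ n),
        {x | (q : ℝ) * n < S n x} := by
      ext x
      simp only [hE, Set.mem_setOf_eq, Set.mem_iUnion, Set.mem_iInter, frequently_atTop,
        ge_iff_le, exists_prop]
    rw [this]
    refine MeasurableSet.iUnion fun q => MeasurableSet.iUnion fun _ =>
      MeasurableSet.iInter fun N => MeasurableSet.iUnion fun n => MeasurableSet.iUnion fun _ => ?_
    exact measurableSet_lt measurable_const (hSm n)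
  -- shift relation
  have hshift : ∀ n x, S n (T x) = S (n + 1) x - g x := by
    intro n x
    rw [hS]
    simp only [birkhoffSum_succ' (⇑T) g n x]
    ring
  have hinv : (⇑T) ⁻¹' E = E := by
    ext x
    simp only [Set.mem_preimage, hE, Set.mem_setOf_eq]
    constructor
    · rintro ⟨q, hq, hfreq⟩
      obtain ⟨q', hq'1, hq'2⟩ := exists_rat_btwn hq
      refine ⟨q', hq'1, ?_⟩
      have hev : ∀ᶠ n : ℕ in atTop, (q' : ℝ) * ((n : ℝ) + 1) ≤ g x + (q : ℝ) * n := by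
        have hpos : (0:ℝ) < (q : ℝ) - (q' : ℝ) := by exact_mod_cast sub_pos.mpr hq'2
        obtain ⟨N, hN⟩ := exists_nat_ge (((q' : ℝ) - g x) / ((q : ℝ) - (q' : ℝ)))
        filter_upwards [eventually_ge_atTop N] with n hn
        have h1 : ((q' : ℝ) - g x) / ((q : ℝ) - (q' : ℝ)) ≤ n := hN.trans (by exact_mod_cast hn)
        rw [div_le_iff₀ hpos] at h1
        nlinarith [h1]
      rw [frequently_atTop]
      intro N
      obtain ⟨n, hn, hlt, hle⟩ := (hfreq.and_eventually hev).forall_exists_of_atTop N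
      refine ⟨n + 1, hn.trans (Nat.le_succ n), ?_⟩
      have hsh := hshift n x
      simp only [hS] at hsh hlt ⊢
      push_cast
      linarith [hsh, hlt, hle]
    · rintro ⟨q, hq, hfreq⟩
      obtain ⟨q', hq'1, hq'2⟩ := exists_rat_btwn hq
      refine ⟨q', hq'1, ?_⟩
      have hev : ∀ᶠ n : ℕ in atTop, ∀ m : ℕ, n = m + 1 →
          (q' : ℝ) * (m : ℝ) ≤ (q : ℝ) * (n : ℝ) - g x := by
        have hpos : (0:ℝ) < (q : ℝ) - (q' : ℝ) := by exact_mod_cast sub_pos.mpr hq'2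
        obtain ⟨N, hN⟩ := exists_nat_ge ((g x - (q' : ℝ)) / ((q : ℝ) - (q' : ℝ)))
        filter_upwards [eventually_ge_atTop N] with n hn m hm
        subst hm
        have h1 : ((g x - (q' : ℝ))) / ((q : ℝ) - (q' : ℝ)) ≤ ((m : ℝ) + 1) := by
          refine hN.trans ?_
          have : (N : ℝ) ≤ ((m + 1 : ℕ) : ℝ) := by exact_mod_cast hn
          push_cast at this
          linarith
        rw [div_le_iff₀ hpos] at h1
        push_cast
        linarith
      rw [frequently_atTop]
      intro N
      obtain ⟨n, hn, hlt, hle⟩ := (hfreq.and_eventually hev).forall_exists_of_atTop (N + 1)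
      obtain ⟨m, rfl⟩ := Nat.exists_eq_succ_of_ne_zero (by omega : n ≠ 0)
      refine ⟨m, by omega, ?_⟩
      have h2 := hle m rfl
      have h3 := hshift m x
      simp only [hS] at h3 hlt ⊢
      push_cast at h2 hlt ⊢
      linarith [h2, h3, hlt]
  rcases hT.toPreErgodic.ae_empty_or_univ hEm hinv with hnull | hfull
  · -- E is null: done
    have : ∀ᵐ x ∂μ, x ∉ E := by
      have h0 : μ E = 0 := by
        have := measure_congr hnull
        simpa using this
      exact (measure_eq_zero_iff_ae_notMem.mp h0)
    filter_upwards [this] with x hx q hq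
    by_contra hc
    rw [not_eventually] at hc
    have : ∃ᶠ n in atTop, (q : ℝ) * n < S n x := by
      apply hc.mono
      intro n hn
      push_neg at hn
      exact hn
    exact hx ⟨q, hq, this⟩
  · -- E is conull: contradiction with the maximal ergodic theorem
    exfalso
    set g' : X → ℝ := fun y => g y - δ with hg'
    set A : Set X := {x | ∃ n, 0 < birkhoffSum (⇑T) g' (n + 1) x} with hA
    have hmax := maximal_ergodic (g := g') T hT.toMeasurePreserving
      (hg.sub measurable_const) (hgi.sub (integrable_const δ))
    have hEA : E ⊆ A := by
      rintro x ⟨q, hq, hfreq⟩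
      obtain ⟨n, hn1, hn2⟩ := (frequently_atTop.mp hfreq) 1
      obtain ⟨m, rfl⟩ := Nat.exists_eq_succ_of_ne_zero (by omega : n ≠ 0)
      refine ⟨m, ?_⟩
      rw [birkhoffSum_sub_const]
      have hmono : δ * ((m : ℝ) + 1) ≤ (q : ℝ) * ((m : ℝ) + 1) := by
        apply mul_le_mul_of_nonneg_right hq.le (by positivity)
      simp only [hS, Nat.succ_eq_add_one] at hn2
      push_cast at hn2 ⊢
      linarith [hn2, hmono]
    have hAfull : Aᶜ ≤ᵐ[μ] (∅ : Set X) := by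
      have hEc : Eᶜ =ᵐ[μ] (Set.univ : Set X)ᶜ := hfull.compl
      have h1 : μ Eᶜ = 0 := by
        have h := measure_congr hEc
        exact h.trans (measure_mono_null (fun x hx => hx (Set.mem_univ x)) measure_empty)
      have h2 : μ Aᶜ = 0 := measure_mono_null (Set.compl_subset_compl.mpr hEA) h1
      filter_upwards [measure_eq_zero_iff_ae_notMem.mp h2] with x hx
      exact hx
    have hAuniv : A =ᵐ[μ] (Set.univ : Set X) := by
      have h2 : μ Aᶜ = 0 := by
        have := hAfull
        rw [measure_eq_zero_iff_ae_notMem]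
        filter_upwards [this] with x hx
        exact hx
      rw [Filter.eventuallyEq_set]
      filter_upwards [measure_eq_zero_iff_ae_notMem.mp h2] with x hx
      simp only [Set.mem_univ, iff_true]
      by_contra hc
      exact hx hc
    have heq : ∫ x in A, g' x ∂μ = ∫ x, g' x ∂μ := by
      rw [setIntegral_congr_set hAuniv, setIntegral_univ]
    rw [heq] at hmax
    have : ∫ x, g' x ∂μ = -δ := by
      rw [hg']
      rw [integral_sub hgi (integrable_const δ), hmean, integral_const]
      simp
    rw [this] at hmax
    linarith


lemma birkhoffSum_neg' (T : X → X) (g : X → ℝ) (n : ℕ) (x : X) :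
    birkhoffSum T (fun y => -g y) n x = -birkhoffSum T g n x := by
  simp [birkhoffSum]

/-- Two-sided smallness of Birkhoff sums, a.e. -/
theorem ae_abs_small (T : X ≃ᵐ X) (hT : Ergodic (⇑T) μ) [IsProbabilityMeasure μ]
    (hg : Measurable g) (hgi : Integrable g μ) (hmean : ∫ x, g x ∂μ = 0) :
    ∀ᵐ x ∂μ, ∀ r : ℚ, 0 < r → ∀ᶠ n in atTop, |birkhoffSum (⇑T) g n x| ≤ (r : ℝ) * n := by
  rw [ae_all_iff]
  intro r
  by_cases hr : 0 < r
  · have hr' : (0:ℝ) < (r:ℝ) := by exact_mod_cast hr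
    have h1 := ae_eventually_le T hT hg hgi hmean (δ := (r:ℝ)/2) (by linarith)
    have h2 := ae_eventually_le (g := fun y => -g y) T hT hg.neg hgi.neg
      (by rw [integral_neg, hmean, neg_zero]) (δ := (r:ℝ)/2) (by linarith)
    filter_upwards [h1, h2] with x h1x h2x _
    have e1 := h1x r (by linarith)
    have e2 := h2x r (by linarith)
    filter_upwards [e1, e2] with n hn1 hn2
    rw [show birkhoffSum (⇑T) (fun y => -g y) n x = -birkhoffSum (⇑T) g n x from
      birkhoffSum_neg' (⇑T) g n x] at hn2
    rw [abs_le]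
    constructor <;> linarith
  · exact Filter.Eventually.of_forall fun x hc => absurd hc hr

lemma seq_max_small {u : ℕ → ℝ}
    (h : ∀ r : ℚ, 0 < r → ∀ᶠ n in atTop, |u n| ≤ (r : ℝ) * n) :
    ∀ δ : ℝ, 0 < δ → ∀ᶠ n : ℕ in atTop, ∀ k, k < n → |u k| ≤ δ * n := by
  intro δ hδ
  obtain ⟨r, hr0, hrδ⟩ := exists_rat_btwn hδ
  have hr0' : 0 < r := by exact_mod_cast hr0
  obtain ⟨N, hN⟩ := eventually_atTop.mp (h r hr0')
  set C := ∑ k ∈ Finset.range N, |u k| with hC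
  have hCk : ∀ k, k < N → |u k| ≤ C := fun k hk =>
    Finset.single_le_sum (fun i _ => abs_nonneg (u i)) (Finset.mem_range.mpr hk)
  have hC0 : 0 ≤ C := Finset.sum_nonneg fun i _ => abs_nonneg (u i)
  obtain ⟨N₂, hN₂⟩ := exists_nat_ge (C / δ)
  rw [eventually_atTop]
  refine ⟨max N N₂, fun n hn k hk => ?_⟩
  have hnN : N ≤ n := le_trans (le_max_left _ _) hn
  have hnN₂ : N₂ ≤ n := le_trans (le_max_right _ _) hn
  rcases lt_or_ge k N with hkN | hkN
  · have h1 : |u k| ≤ C := hCk k hkN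
    have h2 : C / δ ≤ (n : ℝ) := hN₂.trans (by exact_mod_cast hnN₂)
    rw [div_le_iff₀ hδ] at h2
    linarith
  · have h1 := hN k hkN
    have h2 : (r : ℝ) * k ≤ δ * n := by
      have hk' : (k : ℝ) ≤ (n : ℝ) := by exact_mod_cast hk.le
      have : (0:ℝ) ≤ (k:ℝ) := Nat.cast_nonneg k
      nlinarith
    linarith

lemma floor_div_ne_of_sep {a b q : ℝ} (hq : 0 < q) (h : q ≤ |a - b|) : ⌊a / q⌋ ≠ ⌊b / q⌋ := by
  intro he
  have h1 : ((⌊b / q⌋ : ℤ) : ℝ) ≤ a / q := he ▸ Int.floor_le (a / q)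
  have h2 : a / q < (⌊b / q⌋ : ℝ) + 1 := by
    rw [← he]; exact Int.lt_floor_add_one (a / q)
  have h3 : ((⌊b / q⌋ : ℤ) : ℝ) ≤ b / q := Int.floor_le (b / q)
  have h4 : b / q < (⌊b / q⌋ : ℝ) + 1 := Int.lt_floor_add_one (b / q)
  have h1' : (⌊b / q⌋ : ℝ) * q ≤ a := (le_div_iff₀ hq).mp h1
  have h2' : a < ((⌊b / q⌋ : ℝ) + 1) * q := (div_lt_iff₀ hq).mp h2
  have h3' : (⌊b / q⌋ : ℝ) * q ≤ b := (le_div_iff₀ hq).mp h3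
  have h4' : b < ((⌊b / q⌋ : ℝ) + 1) * q := (div_lt_iff₀ hq).mp h4
  have : |a - b| < q := by
    rw [abs_sub_lt_iff]
    constructor <;> nlinarith
  linarith

/-- Counting lemma: visits to the `ε`-escaping set `B` are sparse. -/
lemma visits_le {T : X → X} {g : X → ℝ} {B : Set X} {q : ℝ} (hq : 0 < q) {N : ℕ} (hN : 1 ≤ N)
    (hB : ∀ y ∈ B, ∀ m : ℕ, N ≤ m → q ≤ |birkhoffSum T g m y|)
    (x : X) (n : ℕ) {R : ℝ} (hR : 0 ≤ R)
    (hRb : ∀ k, k < n → |birkhoffSum T g k x| ≤ R) :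
    ∑ k ∈ Finset.range n, Set.indicator B (fun _ => (1:ℝ)) (T^[k] x)
      ≤ (N : ℝ) * (2 * (R / q) + 2) := by
  classical
  set m : ℤ := ⌊R / q⌋ with hm
  have hm0 : 0 ≤ m := Int.floor_nonneg.mpr (div_nonneg hR hq.le)
  set F := (Finset.range n).filter (fun k => T^[k] x ∈ B) with hF
  have hsum : ∑ k ∈ Finset.range n, Set.indicator B (fun _ => (1:ℝ)) (T^[k] x)
      = (F.card : ℝ) := by
    rw [hF, Finset.card_filter]
    push_cast
    apply Finset.sum_congr rfl
    intro k _
    by_cases h : T^[k] x ∈ B <;> simp [Set.indicator, h]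
  rw [hsum]
  -- the separation property within a residue class
  have hsep : ∀ k k', k ∈ F → k' ∈ F → k < k' → k % N = k' % N →
      q ≤ |birkhoffSum T g k' x - birkhoffSum T g k x| := by
    intro k k' hk hk' hlt hmod
    have hkB : T^[k] x ∈ B := (Finset.mem_filter.mp hk).2
    have hdvd : N ∣ (k' - k) := (Nat.modEq_iff_dvd' hlt.le).mp hmod
    have hge : N ≤ k' - k := Nat.le_of_dvd (by omega) hdvd
    have hadd : birkhoffSum T g k' x
        = birkhoffSum T g k x + birkhoffSum T g (k' - k) (T^[k] x) := by
      have := birkhoffSum_add T g k (k' - k) x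
      rwa [Nat.add_sub_cancel' hlt.le] at this
    have := hB _ hkB (k' - k) hge
    rw [hadd]
    simpa using this
  -- each residue class is small
  have hclass : ∀ j, ((F.filter (fun k => k % N = j)).card : ℤ) ≤ 2 * m + 2 := by
    intro j
    have hinj : Set.InjOn (fun k => ⌊birkhoffSum T g k x / q⌋)
        ((F.filter (fun k => k % N = j)) : Set ℕ) := by
      intro k hk k' hk' he
      simp only [Finset.coe_filter, Set.mem_setOf_eq] at hk hk'
      simp only at he
      by_contra hne
      rcases lt_or_gt_of_ne hne with hlt | hlt
      · exact floor_div_ne_of_sep hq (hsep k k' hk.1 hk'.1 hlt (hk.2.trans hk'.2.symm)) he.symm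
      · exact floor_div_ne_of_sep hq (hsep k' k hk'.1 hk.1 hlt (hk'.2.trans hk.2.symm)) he
    have hmaps : ∀ k ∈ F.filter (fun k => k % N = j),
        ⌊birkhoffSum T g k x / q⌋ ∈ Finset.Icc (-(m+1)) m := by
      intro k hk
      have hkr : k < n :=
        Finset.mem_range.mp (Finset.mem_filter.mp (Finset.mem_filter.mp hk).1).1
      have habs := hRb k hkr
      have hub : birkhoffSum T g k x ≤ R := (le_abs_self _).trans habs
      have hlb : -R ≤ birkhoffSum T g k x := (abs_le.mp habs).1
      rw [Finset.mem_Icc]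
      constructor
      · have h1 : ⌊(-R) / q⌋ ≤ ⌊birkhoffSum T g k x / q⌋ := Int.floor_le_floor (by gcongr)
        have h2 : -(m+1) ≤ ⌊(-R)/q⌋ := by
          rw [neg_div, Int.floor_neg]
          have := Int.ceil_le_floor_add_one (R/q)
          omega
        omega
      · exact Int.floor_le_floor (by gcongr)
    have hle := Finset.card_le_card_of_injOn _ hmaps hinj
    have hIcc : (Finset.Icc (-(m+1)) m).card = (2*m+2).toNat := by
      rw [Int.card_Icc]
      congr 1
      ring
    calc ((F.filter (fun k => k % N = j)).card : ℤ)
        ≤ ((Finset.Icc (-(m+1)) m).card : ℤ) := by exact_mod_cast hle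
    _ = ((2*m+2).toNat : ℤ) := by rw [hIcc]
    _ = 2*m+2 := Int.toNat_of_nonneg (by omega)
  have hFsub : F ⊆ (Finset.range N).biUnion (fun j => F.filter (fun k => k % N = j)) := by
    intro k hk
    refine Finset.mem_biUnion.mpr ⟨k % N, Finset.mem_range.mpr (Nat.mod_lt _ hN), ?_⟩
    exact Finset.mem_filter.mpr ⟨hk, rfl⟩
  have hcard : F.card ≤ ∑ j ∈ Finset.range N, (F.filter (fun k => k % N = j)).card :=
    le_trans (Finset.card_le_card hFsub) Finset.card_biUnion_le
  have hcardZ : (F.card : ℤ) ≤ (N : ℤ) * (2*m+2) := by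
    calc (F.card : ℤ)
        ≤ ∑ j ∈ Finset.range N, ((F.filter (fun k => k % N = j)).card : ℤ) := by
          exact_mod_cast hcard
    _ ≤ ∑ _j ∈ Finset.range N, (2*m+2) := Finset.sum_le_sum fun j _ => hclass j
    _ = (N : ℤ) * (2*m+2) := by rw [Finset.sum_const, Finset.card_range, nsmul_eq_mul]
  have hmR : (m : ℝ) ≤ R/q := Int.floor_le _
  have hN0 : (0:ℝ) ≤ (N:ℝ) := Nat.cast_nonneg N
  calc (F.card : ℝ) ≤ (N:ℝ) * (2*(m:ℝ)+2) := by exact_mod_cast hcardZ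
  _ ≤ (N:ℝ) * (2*(R/q)+2) := by nlinarith


/-- The set where Birkhoff sums stay `q`-far from zero from time `N` on is null. -/
theorem key_null (T : X ≃ᵐ X) (hT : Ergodic (⇑T) μ) [IsProbabilityMeasure μ]
    (hg : Measurable g) (hgi : Integrable g μ) (hmean : ∫ x, g x ∂μ = 0)
    {q : ℝ} (hq : 0 < q) {N : ℕ} (hN : 1 ≤ N) :
    μ {x | ∀ n, N ≤ n → q ≤ |birkhoffSum (⇑T) g n x|} = 0 := by
  by_contra hB0
  set B := {x | ∀ n, N ≤ n → q ≤ |birkhoffSum (⇑T) g n x|} with hBdef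
  have hBm : MeasurableSet B := by
    have : B = ⋂ n, {x | N ≤ n → q ≤ |birkhoffSum (⇑T) g n x|} := by
      ext x
      simp [hBdef, Set.mem_iInter]
    rw [this]
    refine MeasurableSet.iInter fun n => ?_
    by_cases h : N ≤ n
    · simp only [h, true_implies]
      exact measurableSet_le measurable_const (birkhoffSum_measurable T.measurable hg n).abs
    · simp [h]
  have hB_prop : ∀ y ∈ B, ∀ m : ℕ, N ≤ m → q ≤ |birkhoffSum (⇑T) g m y| := fun y hy => hy
  set ind : X → ℝ := Set.indicator B (fun _ => (1:ℝ)) with hind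
  have hind_meas : Measurable ind := measurable_const.indicator hBm
  set Vr : ℕ → X → ℝ := fun n x => ∑ k ∈ Finset.range n, ind ((⇑T)^[k] x) with hVr
  set F : ℕ → X → ℝ := fun n x => Vr n x / n with hFdef
  set c := (μ B).toReal with hc
  have hcpos : 0 < c := ENNReal.toReal_pos hB0 (measure_ne_top μ B)
  have hVr_meas : ∀ n, Measurable (Vr n) := fun n =>
    Finset.measurable_sum _ fun k _ => hind_meas.comp (T.measurable.iterate k)
  have hind01 : ∀ y, 0 ≤ ind y ∧ ind y ≤ 1 := by
    intro y
    by_cases h : y ∈ B <;> simp [hind, Set.indicator, h]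
  have hVr_nonneg : ∀ n x, 0 ≤ Vr n x :=
    fun n x => Finset.sum_nonneg fun k _ => (hind01 _).1
  have hVr_le : ∀ n x, Vr n x ≤ n := by
    intro n x
    calc Vr n x ≤ ∑ _k ∈ Finset.range n, (1:ℝ) :=
          Finset.sum_le_sum fun k _ => (hind01 _).2
    _ = n := by simp
  have hNpos : (0:ℝ) < N := by exact_mod_cast hN
  -- dominated convergence setup
  have h_bound : ∀ n, ∀ᵐ x ∂μ, ‖F n x‖ ≤ (1:ℝ) := by
    intro n
    refine Eventually.of_forall fun x => ?_
    rcases Nat.eq_zero_or_pos n with rfl | hn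
    · simp [hFdef]
    · have hnpos : (0:ℝ) < n := by exact_mod_cast hn
      rw [Real.norm_eq_abs, abs_of_nonneg (div_nonneg (hVr_nonneg n x) hnpos.le)]
      rw [div_le_one hnpos]
      exact hVr_le n x
  have h_lim : ∀ᵐ x ∂μ, Tendsto (fun n => F n x) atTop (nhds 0) := by
    filter_upwards [ae_abs_small T hT hg hgi hmean] with x hx
    have hmax := seq_max_small (u := fun k => birkhoffSum (⇑T) g k x) hx
    rw [Metric.tendsto_atTop]
    intro γ hγ
    have hδ : 0 < q * γ / (4 * N) := by positivity
    obtain ⟨N₁, h₁⟩ := eventually_atTop.mp (hmax _ hδ)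
    obtain ⟨N₂, hN₂⟩ := exists_nat_gt (4 * N / γ)
    refine ⟨max N₁ N₂, fun n hn => ?_⟩
    have hnN₁ : N₁ ≤ n := le_trans (le_max_left _ _) hn
    have hnN₂ : N₂ ≤ n := le_trans (le_max_right _ _) hn
    have h4N : 4 * (N:ℝ) / γ < n := hN₂.trans_le (by exact_mod_cast hnN₂)
    have hnpos : (0:ℝ) < n := lt_trans (by positivity) h4N
    have hbound := visits_le (T := (⇑T)) (g := g) hq hN hB_prop x n
      (R := (q * γ / (4 * N)) * n) (by positivity) (fun k hk => h₁ n hnN₁ k hk)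
    rw [Real.dist_eq, sub_zero, hFdef]
    simp only
    rw [abs_of_nonneg (div_nonneg (hVr_nonneg n x) hnpos.le), div_lt_iff₀ hnpos]
    have hsimp : (N:ℝ) * (2 * ((q * γ / (4 * N) * n) / q) + 2) = γ * n / 2 + 2 * N := by
      field_simp
      ring
    have h2N : 2 * (N:ℝ) < γ * n / 2 := by
      rw [div_lt_iff₀ hγ] at h4N
      linarith
    calc Vr n x ≤ (N:ℝ) * (2 * ((q * γ / (4 * N) * n) / q) + 2) := hbound
    _ = γ * n / 2 + 2 * N := hsimp
    _ < γ * n := by linarith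
  have hdct := tendsto_integral_of_dominated_convergence (F := F) (f := fun _ => (0:ℝ))
    (bound := fun _ => (1:ℝ))
    (fun n => ((hVr_meas n).div_const _).aestronglyMeasurable)
    (integrable_const 1) h_bound h_lim
  rw [integral_zero] at hdct
  -- value of the integrals
  have hint_ind : Integrable ind μ := (integrable_const (1:ℝ)).indicator hBm
  have hcomp : ∀ k : ℕ, ∫ x, ind ((⇑T)^[k] x) ∂μ = c := by
    intro k
    have hmp := hT.toMeasurePreserving.iterate k
    calc ∫ x, ind ((⇑T)^[k] x) ∂μ
        = ∫ y, ind y ∂(Measure.map ((⇑T)^[k]) μ) := by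
          rw [integral_map hmp.measurable.aemeasurable hind_meas.aestronglyMeasurable]
    _ = ∫ y, ind y ∂μ := by rw [hmp.map_eq]
    _ = c := by
          rw [hind, integral_indicator_const (1:ℝ) hBm]
          simp [hc]
          rfl
  have hI : ∀ n : ℕ, 1 ≤ n → ∫ x, F n x ∂μ = c := by
    intro n hn
    have hnne : (n:ℝ) ≠ 0 := by positivity
    have hintk : ∀ k ∈ Finset.range n, Integrable (fun x => ind ((⇑T)^[k] x)) μ := by
      intro k _
      exact ((hT.toMeasurePreserving.iterate k).integrable_comp
        hind_meas.aestronglyMeasurable).mpr hint_ind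
    have hVint : ∫ x, Vr n x ∂μ = n * c := by
      rw [hVr]
      simp only
      rw [integral_finset_sum _ hintk]
      simp [hcomp, Finset.sum_const, Finset.card_range, mul_comm]
    rw [hFdef]
    simp only
    rw [integral_div, hVint]
    field_simp
  have hclim : Tendsto (fun n => ∫ x, F n x ∂μ) atTop (nhds c) := by
    refine Tendsto.congr' ?_ tendsto_const_nhds
    filter_upwards [eventually_ge_atTop 1] with n hn
    exact (hI n hn).symm
  have := tendsto_nhds_unique hclim hdct
  linarith

/-- Atkinson's theorem for measurable integrable `g` of zero mean. -/
theorem atkinson_measurable (T : X ≃ᵐ X) (hT : Ergodic (⇑T) μ) [IsProbabilityMeasure μ]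
    (hg : Measurable g) (hgi : Integrable g μ) (hmean : ∫ x, g x ∂μ = 0) :
    ∀ᵐ x ∂μ, ∀ ε > (0:ℝ), ∃ᶠ n in atTop, |birkhoffSum (⇑T) g n x| < ε := by
  have h1 : ∀ᵐ x ∂μ, ∀ r : ℚ, ∀ N : ℕ, 0 < r →
      ¬(∀ n, N + 1 ≤ n → (r:ℝ) ≤ |birkhoffSum (⇑T) g n x|) := by
    rw [ae_all_iff]
    intro r
    rw [ae_all_iff]
    intro N
    by_cases hr : 0 < r
    · have h0 := key_null T hT hg hgi hmean (q := (r:ℝ)) (by exact_mod_cast hr)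
        (N := N + 1) (by omega)
      filter_upwards [measure_eq_zero_iff_ae_notMem.mp h0] with x hx _
      exact hx
    · exact Eventually.of_forall fun x hc => absurd hc hr
  filter_upwards [h1] with x hx ε hε
  obtain ⟨r, hr0, hrε⟩ := exists_rat_btwn hε
  have hr0' : 0 < r := by exact_mod_cast hr0
  rw [frequently_atTop]
  intro N
  have h2 := hx r N hr0'
  push_neg at h2
  obtain ⟨n, hn1, hn2⟩ := h2
  exact ⟨n, by omega, hn2.trans_le hrε.le⟩

end AtkinsonAux

/-- **Atkinson's theorem.** If `T` is an ergodic measure-preserving automorphism of a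
probability space and `f` is integrable with zero mean, then for a.e. `x` the Birkhoff
sums return arbitrarily close to zero infinitely often. -/
theorem atkinson_recurrence {X : Type*} [MeasurableSpace X] {μ : Measure X}
    [IsProbabilityMeasure μ] (T : X ≃ᵐ X) (hT : Ergodic T μ)
    (f : X → ℝ) (hf : Integrable f μ) (hmean : ∫ x, f x ∂μ = 0) :
    ∀ᵐ x ∂μ, ∀ ε > (0 : ℝ),
      ∃ᶠ n in atTop, |∑ k ∈ Finset.range n, f ((T : X → X)^[k] x)| < ε := by
  have hfm : AEStronglyMeasurable f μ := hf.aestronglyMeasurable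
  set g := hfm.mk f with hgdef
  have hgmeas : Measurable g := hfm.stronglyMeasurable_mk.measurable
  have hfg : f =ᵐ[μ] g := hfm.ae_eq_mk
  have hgi : Integrable g μ := hf.congr hfg
  have hgmean : ∫ x, g x ∂μ = 0 := by rw [← integral_congr_ae hfg, hmean]
  have hmain := AtkinsonAux.atkinson_measurable T hT hgmeas hgi hgmean
  have h0 : μ {y | f y ≠ g y} = 0 := by
    exact ae_iff.mp hfm.ae_eq_mk
  have horb : ∀ᵐ x ∂μ, ∀ k : ℕ, f ((⇑T)^[k] x) = g ((⇑T)^[k] x) := by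
    rw [ae_all_iff]
    intro k
    have hmp := hT.toMeasurePreserving.iterate k
    have hnull : μ (((⇑T)^[k]) ⁻¹' {y | f y ≠ g y}) = 0 :=
      hmp.quasiMeasurePreserving.preimage_null h0
    rw [ae_iff]
    convert hnull using 2
    rfl
  filter_upwards [hmain, horb] with x hx horbx ε hε
  refine (hx ε hε).mono fun n hn => ?_
  have hsum : ∑ k ∈ Finset.range n, f ((⇑T)^[k] x) = birkhoffSum (⇑T) g n x :=
    Finset.sum_congr rfl fun k _ => horbx k
  rw [hsum]
  exact hn
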